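/- Let L > 0, f ∈ ℝ, M ≥ 0, and T₁ < T₂. Let y_e, d : ℝ → ℂ be measurable with |d(t)| ≤ M for all t, with ‖y_e‖_{L²(T₁,T₂)} = e^{Lf} ‖y_e‖_{L²(T₁−L,T₂−L)} and 0 < ‖y_e‖_{L²(T₁−L,T₂−L)} < ∞. Set y = y_e + d and ε = M√(T₂−T₁) / ‖y_e‖_{L²(T₁−L,T₂−L)}. If ε < 1, then (e^{Lf} − ε)/(1 + ε) ≤ ‖y‖_{L²(T₁,T₂)} / ‖y‖_{L²(T₁−L,T₂−L)} ≤ (e^{Lf} + ε)/(1 − ε), and in particular ‖y‖_{L²(T₁−L,T₂−L)} > 0. -/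

import Mathlib

open MeasureTheory

lemma eLpNorm_eq_sqrt (a b : ℝ) (hab : a ≤ b) (g : ℝ → ℂ)
    (hg : MemLp g 2 (volume.restrict (Set.Ioc a b))) :
    eLpNorm g 2 (volume.restrict (Set.Ioc a b)) =
      ENNReal.ofReal (Real.sqrt (∫ t in a..b, ‖g t‖ ^ 2)) := by
  rw [hg.eLpNorm_eq_integral_rpow_norm two_ne_zero ENNReal.ofNat_ne_top]
  congr 1
  rw [intervalIntegral.integral_of_le hab, ENNReal.toReal_ofNat, Real.sqrt_eq_rpow]
  have : ∀ t : ℝ, ‖g t‖ ^ (2:ℝ) = ‖g t‖ ^ 2 := fun t => Real.rpow_two _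
  simp_rw [this]
  norm_num

lemma L2_triangle (a b : ℝ) (hab : a ≤ b) (g h : ℝ → ℂ)
    (hg : MemLp g 2 (volume.restrict (Set.Ioc a b)))
    (hh : MemLp h 2 (volume.restrict (Set.Ioc a b))) :
    Real.sqrt (∫ t in a..b, ‖g t + h t‖ ^ 2) ≤
      Real.sqrt (∫ t in a..b, ‖g t‖ ^ 2) + Real.sqrt (∫ t in a..b, ‖h t‖ ^ 2) := by
  have key := eLpNorm_add_le hg.aestronglyMeasurable hh.aestronglyMeasurable one_le_two
    (μ := volume.restrict (Set.Ioc a b))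
  rw [eLpNorm_eq_sqrt a b hab _ (hg.add hh), eLpNorm_eq_sqrt a b hab _ hg,
    eLpNorm_eq_sqrt a b hab _ hh, ← ENNReal.ofReal_add (Real.sqrt_nonneg _) (Real.sqrt_nonneg _),
    ENNReal.ofReal_le_ofReal_iff (by positivity)] at key
  exact key

lemma finiteRestrict (a b : ℝ) : IsFiniteMeasure (volume.restrict (Set.Ioc a b)) :=
  ⟨by rw [Measure.restrict_apply_univ]; exact measure_Ioc_lt_top⟩

lemma sqrt_int_bound (a b M : ℝ) (hab : a ≤ b) (hM : 0 ≤ M) (d : ℝ → ℂ)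
    (hdM : ∀ t, ‖d t‖ ≤ M)
    (hint : IntervalIntegrable (fun t => ‖d t‖ ^ 2) volume a b) :
    Real.sqrt (∫ t in a..b, ‖d t‖ ^ 2) ≤ M * Real.sqrt (b - a) := by
  have h1 : (∫ t in a..b, ‖d t‖ ^ 2) ≤ ∫ _t in a..b, M ^ 2 := by
    apply intervalIntegral.integral_mono_on hab hint intervalIntegrable_const
    intro t _
    exact pow_le_pow_left₀ (norm_nonneg _) (hdM t) 2
  have h2 : (∫ _t in a..b, M ^ 2) = (b - a) * M ^ 2 := by
    rw [intervalIntegral.integral_const, smul_eq_mul]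
  calc Real.sqrt (∫ t in a..b, ‖d t‖ ^ 2) ≤ Real.sqrt ((b - a) * M ^ 2) := by
        apply Real.sqrt_le_sqrt; rw [← h2]; exact h1
    _ = M * Real.sqrt (b - a) := by
        rw [Real.sqrt_mul (by linarith), Real.sqrt_sq hM]; ring

theorem perturbed_ratio_bounds (L : ℝ) (hL : 0 < L) (f M : ℝ) (hM : 0 ≤ M)
    (T₁ T₂ : ℝ) (h12 : T₁ < T₂)
    (ye d : ℝ → ℂ) (hyemeas : Measurable ye) (hdmeas : Measurable d)
    (hdM : ∀ t : ℝ, ‖d t‖ ≤ M)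
    (hyefin : IntervalIntegrable (fun t => ‖ye t‖ ^ 2) volume (T₁ - L) (T₂ - L))
    (hyepos : 0 < Real.sqrt (∫ t in (T₁ - L)..(T₂ - L), ‖ye t‖ ^ 2))
    (hshift : Real.sqrt (∫ t in T₁..T₂, ‖ye t‖ ^ 2) =
      Real.exp (L * f) * Real.sqrt (∫ t in (T₁ - L)..(T₂ - L), ‖ye t‖ ^ 2))
    (y : ℝ → ℂ) (hy : ∀ t : ℝ, y t = ye t + d t)
    (ε : ℝ)
    (hε : ε = M * Real.sqrt (T₂ - T₁) / Real.sqrt (∫ t in (T₁ - L)..(T₂ - L), ‖ye t‖ ^ 2))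
    (hε1 : ε < 1) :
    (Real.exp (L * f) - ε) / (1 + ε) ≤
        Real.sqrt (∫ t in T₁..T₂, ‖y t‖ ^ 2) /
          Real.sqrt (∫ t in (T₁ - L)..(T₂ - L), ‖y t‖ ^ 2) ∧
    Real.sqrt (∫ t in T₁..T₂, ‖y t‖ ^ 2) /
          Real.sqrt (∫ t in (T₁ - L)..(T₂ - L), ‖y t‖ ^ 2) ≤
        (Real.exp (L * f) + ε) / (1 - ε) ∧
    0 < Real.sqrt (∫ t in (T₁ - L)..(T₂ - L), ‖y t‖ ^ 2) := by
  have hab : T₁ ≤ T₂ := h12.le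
  have hab' : T₁ - L ≤ T₂ - L := by linarith
  haveI := finiteRestrict T₁ T₂
  haveI := finiteRestrict (T₁ - L) (T₂ - L)
  set E := Real.exp (L * f) with hE
  set A := Real.sqrt (∫ t in (T₁ - L)..(T₂ - L), ‖ye t‖ ^ 2) with hA
  -- Memℒp facts for d
  have hd_top : ∀ a b : ℝ, MemLp d 2 (volume.restrict (Set.Ioc a b)) := by
    intro a b
    haveI := finiteRestrict a b
    exact (memLp_top_of_bound hdmeas.aestronglyMeasurable.restrict M
      (Filter.Eventually.of_forall hdM)).mono_exponent le_top
  -- Memℒp ye on lower window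
  have hye_low : MemLp ye 2 (volume.restrict (Set.Ioc (T₁ - L) (T₂ - L))) := by
    rw [memLp_two_iff_integrable_sq_norm hyemeas.aestronglyMeasurable.restrict]
    exact (intervalIntegrable_iff_integrableOn_Ioc_of_le hab').1 hyefin
  -- Memℒp ye on upper window
  have hye_hi : MemLp ye 2 (volume.restrict (Set.Ioc T₁ T₂)) := by
    rw [memLp_two_iff_integrable_sq_norm hyemeas.aestronglyMeasurable.restrict]
    by_contra hcon
    have h0 : (∫ t in T₁..T₂, ‖ye t‖ ^ 2) = 0 := by
      rw [intervalIntegral.integral_of_le hab]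
      exact integral_undef hcon
    rw [h0, Real.sqrt_zero] at hshift
    have : 0 < E * A := mul_pos (Real.exp_pos _) hyepos
    linarith [hshift ▸ this]
  have hy_hi : MemLp y 2 (volume.restrict (Set.Ioc T₁ T₂)) := by
    have : y = fun t => ye t + d t := funext hy
    rw [this]; exact hye_hi.add (hd_top T₁ T₂)
  have hy_low : MemLp y 2 (volume.restrict (Set.Ioc (T₁ - L) (T₂ - L))) := by
    have : y = fun t => ye t + d t := funext hy
    rw [this]; exact hye_low.add (hd_top _ _)
  -- disturbance bounds
  have hdint : ∀ a b : ℝ, a ≤ b → IntervalIntegrable (fun t => ‖d t‖ ^ 2) volume a b := by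
    intro a b h
    rw [intervalIntegrable_iff_integrableOn_Ioc_of_le h]
    exact (memLp_two_iff_integrable_sq_norm hdmeas.aestronglyMeasurable.restrict).1 (hd_top a b)
  set δ := M * Real.sqrt (T₂ - T₁) with hδ
  have hd_hi : Real.sqrt (∫ t in T₁..T₂, ‖d t‖ ^ 2) ≤ δ :=
    sqrt_int_bound T₁ T₂ M hab hM d hdM (hdint _ _ hab)
  have hd_low : Real.sqrt (∫ t in (T₁ - L)..(T₂ - L), ‖d t‖ ^ 2) ≤ δ := by
    have := sqrt_int_bound (T₁ - L) (T₂ - L) M hab' hM d hdM (hdint _ _ hab')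
    have heq : T₂ - L - (T₁ - L) = T₂ - T₁ := by ring
    rwa [heq] at this
  have hδε : δ = ε * A := by rw [hε]; field_simp
  set Bh := Real.sqrt (∫ t in T₁..T₂, ‖y t‖ ^ 2) with hBh
  set Bl := Real.sqrt (∫ t in (T₁ - L)..(T₂ - L), ‖y t‖ ^ 2) with hBl
  have hε0 : 0 ≤ ε := by
    rw [hε]; positivity
  -- triangle inequalities
  have tri1 : Bh ≤ E * A + δ := by
    have h1 := L2_triangle T₁ T₂ hab ye d hye_hi (hd_top T₁ T₂)
    have h2 : (∫ t in T₁..T₂, ‖y t‖ ^ 2) = ∫ t in T₁..T₂, ‖ye t + d t‖ ^ 2 := by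
      apply intervalIntegral.integral_congr; intro t _; simp [hy t]
    rw [hBh, h2, ← hshift]
    linarith
  have tri2 : E * A ≤ Bh + δ := by
    have h1 := L2_triangle T₁ T₂ hab y (fun t => -d t) hy_hi (hd_top T₁ T₂).neg
    have h2 : (∫ t in T₁..T₂, ‖y t + -d t‖ ^ 2) = ∫ t in T₁..T₂, ‖ye t‖ ^ 2 := by
      apply intervalIntegral.integral_congr; intro t _; simp [hy t]
    have h3 : (∫ t in T₁..T₂, ‖-d t‖ ^ 2) = ∫ t in T₁..T₂, ‖d t‖ ^ 2 := by
      apply intervalIntegral.integral_congr; intro t _; simp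
    rw [h2, h3] at h1
    rw [← hshift]
    linarith
  have tri3 : Bl ≤ A + δ := by
    have h1 := L2_triangle (T₁ - L) (T₂ - L) hab' ye d hye_low (hd_top _ _)
    have h2 : (∫ t in (T₁ - L)..(T₂ - L), ‖y t‖ ^ 2) =
        ∫ t in (T₁ - L)..(T₂ - L), ‖ye t + d t‖ ^ 2 := by
      apply intervalIntegral.integral_congr; intro t _; simp [hy t]
    rw [hBl, h2]
    linarith
  have tri4 : A ≤ Bl + δ := by
    have h1 := L2_triangle (T₁ - L) (T₂ - L) hab' y (fun t => -d t) hy_low (hd_top _ _).neg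
    have h2 : (∫ t in (T₁ - L)..(T₂ - L), ‖y t + -d t‖ ^ 2) =
        ∫ t in (T₁ - L)..(T₂ - L), ‖ye t‖ ^ 2 := by
      apply intervalIntegral.integral_congr; intro t _; simp [hy t]
    have h3 : (∫ t in (T₁ - L)..(T₂ - L), ‖-d t‖ ^ 2) =
        ∫ t in (T₁ - L)..(T₂ - L), ‖d t‖ ^ 2 := by
      apply intervalIntegral.integral_congr; intro t _; simp
    rw [h2, h3] at h1
    linarith
  -- arithmetic
  rw [hδε] at tri1 tri2 tri3 tri4
  have hBl_lo : (1 - ε) * A ≤ Bl := by linarith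
  have hBl_pos : 0 < Bl := lt_of_lt_of_le (by nlinarith) hBl_lo
  have hBh0 : 0 ≤ Bh := Real.sqrt_nonneg _
  refine ⟨?_, ?_, hBl_pos⟩
  · rcases le_or_gt (E - ε) 0 with hc | hc
    · have : (E - ε) / (1 + ε) ≤ 0 := div_nonpos_iff.2 (Or.inr ⟨hc, by linarith⟩)
      exact this.trans (div_nonneg hBh0 hBl_pos.le)
    · have h1 : (E - ε) / (1 + ε) = ((E - ε) * A) / ((1 + ε) * A) := by
        rw [mul_div_mul_right _ _ (ne_of_gt hyepos)]
      rw [h1]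
      apply div_le_div₀ hBh0 (by linarith) hBl_pos (by linarith)
  · have h1 : (E + ε) / (1 - ε) = ((E + ε) * A) / ((1 - ε) * A) := by
      rw [mul_div_mul_right _ _ (ne_of_gt hyepos)]
    rw [h1]
    apply div_le_div₀ (by nlinarith [Real.exp_pos (L * f)]) (by linarith)
      (by nlinarith) hBl_lo
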